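/- For T: X ⇉ X* and x ∈ X, the set V_T(x) = {y ∈ X : ∃ y* ∈ T(y), ⟨x−y, y*⟩ > 0} is empty if and only if T^ν(x) = X*. -/

import Mathlib

open NormedSpace

variable {X : Type*} [NormedAddCommGroup X] [NormedSpace ℝ X]

/-- quasimonotone relation: (x,x*) ∼q (y,y*) iff min{⟨y−x,x*⟩, ⟨x−y,y*⟩} ≤ 0 -/
def qrel (p q : X × StrongDual ℝ X) : Prop :=
  min (p.2 (q.1 - p.1)) (q.2 (p.1 - q.1)) ≤ 0

/-- quasimonotone polar -/
def qpolar (T : Set (X × StrongDual ℝ X)) : Set (X × StrongDual ℝ X) :=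
  {p | ∀ q ∈ T, qrel p q}

/-- imagewise conic hull of an operator -/
def coneOp (T : Set (X × StrongDual ℝ X)) : Set (X × StrongDual ℝ X) :=
  {p | ∃ t : ℝ, 0 ≤ t ∧ ∃ v, (p.1, v) ∈ T ∧ p.2 = t • v}

def QuasiMono (T : Set (X × StrongDual ℝ X)) : Prop := ∀ p ∈ T, ∀ q ∈ T, qrel p q

def MaxQuasiMono (T : Set (X × StrongDual ℝ X)) : Prop :=
  QuasiMono T ∧ ∀ S, QuasiMono S → T ⊆ S → S = T

def Vset (T : Set (X × StrongDual ℝ X)) (x : X) : Set X :=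
  {y | ∃ y' : StrongDual ℝ X, (y, y') ∈ T ∧ 0 < y' (x - y)}

/-- the image T^ν(x) of the quasimonotone polar -/
def polarIm (T : Set (X × StrongDual ℝ X)) (x : X) : Set (StrongDual ℝ X) :=
  {x' | (x, x') ∈ qpolar T}

/-- normal cone of C at x (no convexity or membership assumed) -/
def normalCone (C : Set X) (x : X) : Set (StrongDual ℝ X) :=
  {x' | ∀ y ∈ C, x' (y - x) ≤ 0}

def im (T : Set (X × StrongDual ℝ X)) (x : X) : Set (StrongDual ℝ X) := {v | (x, v) ∈ T}

/-- effective domain: T(u) nonempty and ≠ {0} -/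
def edom (T : Set (X × StrongDual ℝ X)) : Set X :=
  {u | (im T u).Nonempty ∧ im T u ≠ {0}}

/-- conic hull of a set in the dual -/
def coneSet (A : Set (StrongDual ℝ X)) : Set (StrongDual ℝ X) :=
  {v | ∃ t : ℝ, 0 ≤ t ∧ ∃ a ∈ A, v = t • a}

def Eset (T : Set (X × StrongDual ℝ X)) : Set X := {x | Vset T x = ∅}

/-- solution set of the Minty variational inequality for S on K -/
def Minty (S : Set (X × StrongDual ℝ X)) (K : Set X) : Set X :=
  {x ∈ K | ∀ q ∈ S, q.1 ∈ K → q.2 (x - q.1) ≤ 0}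

def AEMaxQuasiMono (T : Set (X × StrongDual ℝ X)) : Prop :=
  QuasiMono T ∧ ∀ S, QuasiMono S → (∀ x ∈ edom T, im T x ⊆ coneSet (im S x)) →
    (∀ x ∈ edom T, coneSet (im T x) = coneSet (im S x)) ∧ edom T = edom S

theorem stmt8 [CompleteSpace X] (T : Set (X × StrongDual ℝ X)) (x : X) :
    Vset T x = ∅ ↔ polarIm T x = Set.univ := by
  constructor
  · intro hV
    ext x'
    simp only [Set.mem_univ, iff_true, polarIm, qpolar, Set.mem_setOf_eq]
    intro q hq
    have hy : q.2 (x - q.1) ≤ 0 := by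
      by_contra h
      push_neg at h
      have : q.1 ∈ Vset T x := ⟨q.2, hq, h⟩
      simp [hV] at this
    exact min_le_of_right_le hy
  · intro hP
    ext y
    simp only [Set.mem_empty_iff_false, iff_false, Vset, Set.mem_setOf_eq]
    rintro ⟨y', hyT, hpos⟩
    have hne : y - x ≠ 0 := by
      intro h
      have : x - y = 0 := by
        have := neg_eq_zero.mpr h
        simpa [neg_sub] using this
      rw [this] at hpos
      simp at hpos
    obtain ⟨g, hg1, hg2⟩ := exists_dual_vector ℝ (y - x) (norm_ne_zero_iff.mpr hne)
    have hgmem : (x, g) ∈ qpolar T := by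
      have := hP ▸ (Set.mem_univ g)
      have : g ∈ polarIm T x := by rw [hP]; trivial
      exact this
    have := hgmem (y, y') hyT
    simp only [qrel] at this
    have hgpos : 0 < g (y - x) := by
      rw [hg2]
      exact_mod_cast norm_pos_iff.mpr hne
    rcases min_le_iff.mp this with h | h
    · exact absurd h (not_le.mpr hgpos)
    · exact absurd h (not_le.mpr hpos)
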